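/- In the counting direction of the Hamiltonian-cycle reduction: if a polygonal closed curve Q with vertices on a set S of n segments (with only proper pairwise intersections and no endpoint incidences) visits both endpoints of every segment and returns to its start, then Q has at least 3 vertices lying on each segment of S; consequently Q has at least 3n + 1 vertices in total (counting the repeated start/end vertex twice). -/

import Mathlib

open Set
open scoped Classical

abbrev E2 := EuclideanSpace ℝ (Fin 2)

/-- A closed polygonal walk with `m + 1` vertices `v 0, …, v m` (the common
start/end vertex counted twice), starting and ending at `P`, each of whose
edges lies inside a single segment of the family, and which visits both
endpoints of every segment. -/
def IsSegWalk (n : ℕ) (a b : Fin n → E2) (P : E2) (m : ℕ)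
    (v : Fin (m + 1) → E2) : Prop :=
  v 0 = P ∧ v (Fin.last m) = P ∧
  (∀ i : Fin m,
    ∃ k, segment ℝ (v i.castSucc) (v i.succ) ⊆ segment ℝ (a k) (b k)) ∧
  (∀ k, a k ∈ range v ∧ b k ∈ range v)

/-- Counting direction of the Hamiltonian-cycle reduction: a closed polygonal
walk on `n` segments (all pairwise intersections proper crossings, no endpoint
incidences) visiting both endpoints of every segment has at least `3` vertices
on each segment, and hence at least `3n + 1` vertices in total (the repeated
start/end vertex counted twice). -/
theorem stmt_8 (n : ℕ) (hn : 2 ≤ n) (a b : Fin n → E2)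
    (hnd : ∀ i, a i ≠ b i)
    (hproper : ∀ i j, i ≠ j → ∀ x, x ∈ segment ℝ (a i) (b i) →
      x ∈ segment ℝ (a j) (b j) →
      x ∈ openSegment ℝ (a i) (b i) ∧ x ∈ openSegment ℝ (a j) (b j))
    (hend : ∀ i j, i ≠ j → a i ∉ segment ℝ (a j) (b j) ∧
      b i ∉ segment ℝ (a j) (b j))
    (P : E2) (i₀ : Fin n) (hP : P = a i₀)
    (m : ℕ) (v : Fin (m + 1) → E2) (hwalk : IsSegWalk n a b P m v) :
    (∀ k, 3 ≤ (Finset.univ.filter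
      (fun i : Fin (m + 1) => v i ∈ segment ℝ (a k) (b k))).card) ∧
    3 * n + 1 ≤ m + 1 := by
  obtain ⟨hv0, hvlast, hedge, hmem⟩ := hwalk
  -- a segment other than the one through P
  obtain ⟨k₁, hk₁⟩ : ∃ k : Fin n, k ≠ i₀ := by
    have h1 : 1 < Fintype.card (Fin n) := by simpa using (show 1 < n by omega)
    obtain ⟨x, hx⟩ := Fintype.exists_ne_of_one_lt_card h1 i₀
    exact ⟨x, hx⟩
  obtain ⟨i, hi⟩ := (hmem k₁).1
  obtain ⟨j, hj⟩ := (hmem k₁).2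
  have haP : a k₁ ≠ P := by
    rw [hP]; intro h
    exact (hend k₁ i₀ hk₁).1 (by rw [h]; exact left_mem_segment ℝ _ _)
  have hbP : b k₁ ≠ P := by
    rw [hP]; intro h
    exact (hend k₁ i₀ hk₁).2 (by rw [h]; exact left_mem_segment ℝ _ _)
  have hij : i ≠ j := by
    intro h; rw [h, hj] at hi; exact hnd k₁ hi.symm
  have hi0 : i ≠ 0 := fun h => haP (by rw [← hi, h, hv0])
  have hil : i ≠ Fin.last m := fun h => haP (by rw [← hi, h, hvlast])
  have hj0 : j ≠ 0 := fun h => hbP (by rw [← hj, h, hv0])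
  have hjl : j ≠ Fin.last m := fun h => hbP (by rw [← hj, h, hvlast])
  have hm1 : 0 < m := by
    rcases Nat.eq_zero_or_pos m with h | h
    · subst h
      have hiv := i.isLt
      have hjv := j.isLt
      exact absurd (Fin.ext (by omega)) hij
    · exact h
  have h0l : (0 : Fin (m + 1)) ≠ Fin.last m := by
    simp only [ne_eq, Fin.ext_iff, Fin.val_last, Fin.val_zero]; omega
  have hm3 : 3 ≤ m := by
    have e1 : i ∉ ({j} : Finset (Fin (m + 1))) := by simp [hij]
    have e2 : Fin.last m ∉ ({i, j} : Finset (Fin (m + 1))) := by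
      simp [Ne.symm hil, Ne.symm hjl]
    have e3 : (0 : Fin (m + 1)) ∉ ({Fin.last m, i, j} : Finset (Fin (m + 1))) := by
      simp [h0l, Ne.symm hi0, Ne.symm hj0]
    have hc : ({0, Fin.last m, i, j} : Finset (Fin (m + 1))).card = 4 := by
      rw [Finset.card_insert_of_notMem e3, Finset.card_insert_of_notMem e2,
        Finset.card_insert_of_notMem e1, Finset.card_singleton]
    have hle : ({0, Fin.last m, i, j} : Finset (Fin (m + 1))).card ≤ m + 1 := by
      simpa using Finset.card_le_univ ({0, Fin.last m, i, j} : Finset (Fin (m + 1)))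
    omega
  clear hi hj hij hi0 hil hj0 hjl h0l i j haP hbP hk₁
  -- the cyclic vertex sequence
  set w : ℕ → E2 := fun t => v ⟨t % m % (m + 1), Nat.mod_lt _ (Nat.succ_pos m)⟩ with hwdef
  have hweq : ∀ s t : ℕ, s % m = t % m → w s = w t := by
    intro s t h
    simp only [hwdef]
    exact congrArg v (Fin.ext (by simp only []; rw [h]))
  have hvnat : ∀ t : ℕ, ∀ h : t < m, v ⟨t, Nat.lt_succ_of_lt h⟩ = w t := by
    intro t h
    simp only [hwdef]
    exact congrArg v (Fin.ext (by
      simp [Nat.mod_eq_of_lt h, Nat.mod_eq_of_lt (show t < m + 1 by omega)]))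
  have hvnat' : ∀ t : ℕ, ∀ h : t ≤ m, v ⟨t, Nat.lt_succ_of_le h⟩ = w t := by
    intro t h
    rcases lt_or_eq_of_le h with h' | h'
    · exact hvnat t h'
    · subst h'
      have h1 : (⟨t, Nat.lt_succ_of_le h⟩ : Fin (t + 1)) = Fin.last t := Fin.ext rfl
      rw [h1, hvlast, ← hv0]
      simp only [hwdef]
      exact congrArg v (Fin.ext (by simp))
  -- every edge is contained in some segment
  have hedge' : ∀ t : ℕ, ∃ k, segment ℝ (w t) (w (t + 1)) ⊆ segment ℝ (a k) (b k) := by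
    intro t
    obtain ⟨k, hk⟩ := hedge ⟨t % m, Nat.mod_lt t hm1⟩
    refine ⟨k, ?_⟩
    have h1 : w t = v (Fin.castSucc ⟨t % m, Nat.mod_lt t hm1⟩) := by
      simp only [hwdef]
      exact congrArg v (Fin.ext (by
        simp [Nat.mod_eq_of_lt (show t % m < m + 1 by
          have := Nat.mod_lt t hm1; omega)]))
    have h2 : w (t + 1) = v (Fin.succ ⟨t % m, Nat.mod_lt t hm1⟩) := by
      have hmod : (t + 1) % m = (t % m + 1) % m := by
        conv_lhs => rw [Nat.add_mod, Nat.mod_eq_of_lt (show 1 < m by omega)]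
      rcases Nat.lt_or_ge (t % m + 1) m with h' | hge
      · -- t % m + 1 < m
        have h3 : (t + 1) % m = t % m + 1 := by
          rw [hmod, Nat.mod_eq_of_lt h']
        simp only [hwdef]
        exact congrArg v (Fin.ext (by
          simp [h3, Nat.mod_eq_of_lt (show t % m + 1 < m + 1 by omega)]))
      · -- t % m + 1 = m
        have h' : t % m + 1 = m := by have := Nat.mod_lt t hm1; omega
        have h3 : (t + 1) % m = 0 := by rw [hmod, h', Nat.mod_self]
        have h4 : Fin.succ (⟨t % m, Nat.mod_lt t hm1⟩ : Fin m) = Fin.last m :=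
          Fin.ext (by simp [h'])
        rw [h4, hvlast, ← hv0]
        simp only [hwdef]
        exact congrArg v (Fin.ext (by simp [h3]))
    rw [h1, h2] at *
    exact hk
  -- an edge incident to an endpoint of segment k lies inside segment k
  have hforce : ∀ t : ℕ, ∀ k : Fin n,
      (w t = a k ∨ w t = b k ∨ w (t + 1) = a k ∨ w (t + 1) = b k) →
      segment ℝ (w t) (w (t + 1)) ⊆ segment ℝ (a k) (b k) := by
    intro t k hocc
    obtain ⟨k', hk'⟩ := hedge' t
    rcases eq_or_ne k' k with rfl | hne
    · exact hk'
    · exfalso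
      have hl : w t ∈ segment ℝ (a k') (b k') := hk' (left_mem_segment ℝ _ _)
      have hr : w (t + 1) ∈ segment ℝ (a k') (b k') := hk' (right_mem_segment ℝ _ _)
      rcases hocc with h | h | h | h
      · exact (hend k k' (Ne.symm hne)).1 (h ▸ hl)
      · exact (hend k k' (Ne.symm hne)).2 (h ▸ hl)
      · exact (hend k k' (Ne.symm hne)).1 (h ▸ hr)
      · exact (hend k k' (Ne.symm hne)).2 (h ▸ hr)
  -- both endpoints of each segment occur in the cyclic sequence
  have hocc : ∀ k : Fin n, (∃ t < m, w t = a k) ∧ (∃ t < m, w t = b k) := by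
    intro k
    constructor
    · obtain ⟨i', hi'⟩ := (hmem k).1
      rcases lt_or_eq_of_le (Nat.lt_succ_iff.mp i'.isLt) with h | h
      · refine ⟨i'.val, h, ?_⟩
        rw [← hi']
        exact (congrArg v (Fin.ext rfl) : v ⟨i'.val, Nat.lt_succ_of_lt h⟩ = v i') ▸
          (hvnat i'.val h).symm ▸ rfl
      · refine ⟨0, hm1, ?_⟩
        rw [← hi', show i' = Fin.last m from Fin.ext h, hvlast, ← hv0]
        simp only [hwdef]
        exact congrArg v (Fin.ext (by simp))
    · obtain ⟨i', hi'⟩ := (hmem k).2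
      rcases lt_or_eq_of_le (Nat.lt_succ_iff.mp i'.isLt) with h | h
      · refine ⟨i'.val, h, ?_⟩
        rw [← hi']
        exact (congrArg v (Fin.ext rfl) : v ⟨i'.val, Nat.lt_succ_of_lt h⟩ = v i') ▸
          (hvnat i'.val h).symm ▸ rfl
      · refine ⟨0, hm1, ?_⟩
        rw [← hi', show i' = Fin.last m from Fin.ext h, hvlast, ← hv0]
        simp only [hwdef]
        exact congrArg v (Fin.ext (by simp))
  -- Part 1 : at least three vertices on each segment
  have part1 : ∀ k, 3 ≤ (Finset.univ.filter
      (fun i : Fin (m + 1) => v i ∈ segment ℝ (a k) (b k))).card := by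
    intro k
    obtain ⟨⟨ta, hta, hwa⟩, ⟨tb, htb, hwb⟩⟩ := hocc k
    have htab : ta ≠ tb := by
      intro h; rw [h, hwb] at hwa; exact hnd k hwa.symm
    have hsa : ta ≤ max ta tb := le_max_left _ _
    have hsb : tb ≤ max ta tb := le_max_right _ _
    have hsm : max ta tb < m := max_lt hta htb
    have hws : w (max ta tb) = a k ∨ w (max ta tb) = b k := by
      rcases max_choice ta tb with h | h
      · left; rw [h, hwa]
      · right; rw [h, hwb]
    have hnext : w (max ta tb + 1) ∈ segment ℝ (a k) (b k) :=
      hforce (max ta tb) k (by tauto) (right_mem_segment ℝ _ _)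
    have hsub : ({⟨ta, by omega⟩, ⟨tb, by omega⟩, ⟨max ta tb + 1, by omega⟩} :
        Finset (Fin (m + 1))) ⊆ Finset.univ.filter
        (fun i : Fin (m + 1) => v i ∈ segment ℝ (a k) (b k)) := by
      intro x hx
      simp only [Finset.mem_insert, Finset.mem_singleton] at hx
      simp only [Finset.mem_filter, Finset.mem_univ, true_and]
      rcases hx with rfl | rfl | rfl
      · rw [hvnat' ta (by omega), hwa]; exact left_mem_segment ℝ _ _
      · rw [hvnat' tb (by omega), hwb]; exact right_mem_segment ℝ _ _
      · rw [hvnat' (max ta tb + 1) (by omega)]; exact hnext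
    have e1 : (⟨tb, by omega⟩ : Fin (m + 1)) ∉
        ({⟨max ta tb + 1, by omega⟩} : Finset (Fin (m + 1))) := by
      simp only [Finset.mem_singleton, Fin.ext_iff]; omega
    have e2 : (⟨ta, by omega⟩ : Fin (m + 1)) ∉
        ({⟨tb, by omega⟩, ⟨max ta tb + 1, by omega⟩} : Finset (Fin (m + 1))) := by
      simp only [Finset.mem_insert, Finset.mem_singleton, Fin.ext_iff]; omega
    have hc : ({⟨ta, by omega⟩, ⟨tb, by omega⟩, ⟨max ta tb + 1, by omega⟩} :
        Finset (Fin (m + 1))).card = 3 := by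
      rw [Finset.card_insert_of_notMem e2, Finset.card_insert_of_notMem e1,
        Finset.card_singleton]
    calc 3 = _ := hc.symm
      _ ≤ _ := Finset.card_le_card hsub
  -- Part 2 : disjoint families of at least three edges per segment
  set F : Fin n → Finset ℕ := fun k => (Finset.range m).filter
    (fun t => w t = a k ∨ w t = b k ∨ w (t + 1) = a k ∨ w (t + 1) = b k) with hF
  have hdisj : ∀ k k' : Fin n, k ≠ k' → Disjoint (F k) (F k') := by
    intro k k' hkk'
    rw [Finset.disjoint_left]
    intro t htk htk'
    simp only [hF, Finset.mem_filter, Finset.mem_range] at htk htk'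
    have hsub := hforce t k' htk'.2
    have hl := hsub (left_mem_segment ℝ (w t) (w (t + 1)))
    have hr := hsub (right_mem_segment ℝ (w t) (w (t + 1)))
    rcases htk.2 with h | h | h | h
    · exact (hend k k' hkk').1 (h ▸ hl)
    · exact (hend k k' hkk').2 (h ▸ hl)
    · exact (hend k k' hkk').1 (h ▸ hr)
    · exact (hend k k' hkk').2 (h ▸ hr)
  have hcard3 : ∀ k, 3 ≤ (F k).card := by
    intro k
    obtain ⟨⟨ta, hta, hwa⟩, ⟨tb, htb, hwb⟩⟩ := hocc k
    have htab : ta ≠ tb := by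
      intro h; rw [h, hwb] at hwa; exact hnd k hwa.symm
    set p := if ta = 0 then m - 1 else ta - 1 with hpd
    set q := if tb = 0 then m - 1 else tb - 1 with hqd
    have hp : (ta = 0 ∧ p = m - 1) ∨ (0 < ta ∧ p = ta - 1) := by
      rw [hpd]; split_ifs with h
      · exact Or.inl ⟨h, rfl⟩
      · exact Or.inr ⟨Nat.pos_of_ne_zero h, rfl⟩
    have hq : (tb = 0 ∧ q = m - 1) ∨ (0 < tb ∧ q = tb - 1) := by
      rw [hqd]; split_ifs with h
      · exact Or.inl ⟨h, rfl⟩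
      · exact Or.inr ⟨Nat.pos_of_ne_zero h, rfl⟩
    have hpm : (p + 1) % m = ta := by
      rcases hp with ⟨h1, h2⟩ | ⟨h1, h2⟩
      · rw [h2, show m - 1 + 1 = m by omega, Nat.mod_self, h1]
      · rw [h2, show ta - 1 + 1 = ta by omega]; exact Nat.mod_eq_of_lt hta
    have hqm : (q + 1) % m = tb := by
      rcases hq with ⟨h1, h2⟩ | ⟨h1, h2⟩
      · rw [h2, show m - 1 + 1 = m by omega, Nat.mod_self, h1]
      · rw [h2, show tb - 1 + 1 = tb by omega]; exact Nat.mod_eq_of_lt htb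
    have hwp : w (p + 1) = a k := by
      rw [hweq (p + 1) ta (by rw [hpm]; exact (Nat.mod_eq_of_lt hta).symm), hwa]
    have hwq : w (q + 1) = b k := by
      rw [hweq (q + 1) tb (by rw [hqm]; exact (Nat.mod_eq_of_lt htb).symm), hwb]
    have htaF : ta ∈ F k := by
      simp only [hF, Finset.mem_filter, Finset.mem_range]
      exact ⟨hta, Or.inl hwa⟩
    have htbF : tb ∈ F k := by
      simp only [hF, Finset.mem_filter, Finset.mem_range]
      exact ⟨htb, Or.inr (Or.inl hwb)⟩
    have hpF : p ∈ F k := by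
      simp only [hF, Finset.mem_filter, Finset.mem_range]
      exact ⟨by omega, Or.inr (Or.inr (Or.inl hwp))⟩
    have hqF : q ∈ F k := by
      simp only [hF, Finset.mem_filter, Finset.mem_range]
      exact ⟨by omega, Or.inr (Or.inr (Or.inr hwq))⟩
    set r := if p = tb then q else p with hrd
    have hrF : r ∈ F k := by
      rw [hrd]; split_ifs
      · exact hqF
      · exact hpF
    have hr1 : r ≠ ta := by
      rw [hrd]; split_ifs with h
      · omega
      · omega
    have hr2 : r ≠ tb := by
      rw [hrd]; split_ifs with h
      · omega
      · exact h
    have hsub : ({ta, tb, r} : Finset ℕ) ⊆ F k := by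
      intro x hx
      simp only [Finset.mem_insert, Finset.mem_singleton] at hx
      rcases hx with rfl | rfl | rfl
      · exact htaF
      · exact htbF
      · exact hrF
    have e1 : tb ∉ ({r} : Finset ℕ) := by simp [Ne.symm hr2]
    have e2 : ta ∉ ({tb, r} : Finset ℕ) := by
      simp only [Finset.mem_insert, Finset.mem_singleton]
      push_neg
      exact ⟨htab, Ne.symm hr1⟩
    have hc : ({ta, tb, r} : Finset ℕ).card = 3 := by
      rw [Finset.card_insert_of_notMem e2, Finset.card_insert_of_notMem e1,
        Finset.card_singleton]
    calc 3 = _ := hc.symm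
      _ ≤ _ := Finset.card_le_card hsub
  have hsum : 3 * n ≤ m := by
    have h1 : ((Finset.univ : Finset (Fin n)).biUnion F).card = ∑ k, (F k).card :=
      Finset.card_biUnion (fun x _ y _ hxy => hdisj x y hxy)
    have h2 : (Finset.univ : Finset (Fin n)).biUnion F ⊆ Finset.range m := by
      intro t ht
      simp only [Finset.mem_biUnion] at ht
      obtain ⟨k, _, htk⟩ := ht
      simp only [hF, Finset.mem_filter, Finset.mem_range] at htk
      exact Finset.mem_range.mpr htk.1
    have h3 := Finset.card_le_card h2
    rw [h1, Finset.card_range] at h3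
    have h4 : 3 * n = ∑ _k : Fin n, 3 := by
      simp [Finset.sum_const, Finset.card_univ, mul_comm]
    rw [h4]
    exact le_trans (Finset.sum_le_sum (fun k _ => hcard3 k)) h3
  exact ⟨part1, by omega⟩
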